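/- Lemma 4.1 (equivalence of spectral-singularity equations): let u ∈ (0,1), β > 0, ℓ ≥ 0, and suppose D := (2−u⁴)·cos(β/u) + u⁴·(1−2u⁴)·cosh(βu) ≠ 0. Set S := √(u^{−2} − u²), A₁ := (u⁴−2)·cos(β/u) + u⁴·(2u⁴−1)·cosh(βu), A₂ := 2√(1−u⁴)·(u⁶·sinh(βu) − sin(β/u)), and B := u⁴·(cosh(βu) − cos(β/u)). Then the system of equations A₁ = B·cos(2βℓS) and A₂ = −B·sin(2βℓS) holds if and only if: g(u,β) = 0, and there exists an integer n with 2βℓS = arctan(A₂/D) + πn and (−1)^n = sign(A₁). -/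
import Mathlib

/-- The function `g(u,β)` whose roots `u ∈ (0,1)` determine the spectral singularities of the
PT-symmetric waveguide with gain-and-loss amplitude `γ = β²/2`. (Note that for `u = 0` the
formula evaluates to `1`, the limit value as `u → 0⁺`, since in Lean `β/0 = 0`.) -/
noncomputable def g (u β : ℝ) : ℝ :=
  u^4 * (1 - u^4) * Real.cosh (β * u) * Real.cos (β / u)
    - 2 * u^6 * Real.sinh (β * u) * Real.sin (β / u) + 1 - u^12

/-- Pure algebraic identity relating `A₁² + A₂² - B²` to `g`. -/
lemma key_alg (u c s C Sh q : ℝ) (hq : q^2 = 1 - u^4) (hp : s^2 + c^2 = 1)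
    (hc : C^2 - Sh^2 = 1) :
    ((u^4-2)*c + u^4*(2*u^4-1)*C)^2 + (2*q*(u^6*Sh - s))^2 - (u^4*(C-c))^2
      = 4*(1-u^4) * (u^4*(1-u^4)*C*c - 2*u^6*Sh*s + 1 - u^12) := by
  linear_combination (4*(u^12*Sh^2 - 2*u^6*s*Sh + s^2))*hq + (4*(1-u^4))*hp
    + (-(4*(1-u^4)*u^12))*hc

/-- Any real number with nonvanishing cosine can be written as `arctan (tan θ) + π n`
with `(-1)^n` recording the sign of the cosine. -/
lemma rep_exists (θ : ℝ) (h : Real.cos θ ≠ 0) :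
    ∃ n : ℤ, θ = Real.arctan (Real.tan θ) + Real.pi * n ∧
      (-1 : ℝ)^n = Real.sign (Real.cos θ) := by
  have hπ := Real.pi_pos
  set n : ℤ := round (θ / Real.pi) with hn
  set φ : ℝ := θ - Real.pi * n with hφ
  have habs : |θ / Real.pi - n| ≤ 1/2 := abs_sub_round _
  have hφabs : |φ| ≤ Real.pi / 2 := by
    have h2 := abs_le.mp habs
    rw [abs_le]
    constructor
    · have h1 : -(1/2 : ℝ) * Real.pi ≤ (θ / Real.pi - n) * Real.pi :=
        mul_le_mul_of_nonneg_right h2.1 hπ.le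
      rw [sub_mul, div_mul_cancel₀ _ hπ.ne'] at h1
      rw [hφ]; linarith
    · have h1 : (θ / Real.pi - n) * Real.pi ≤ (1/2 : ℝ) * Real.pi :=
        mul_le_mul_of_nonneg_right h2.2 hπ.le
      rw [sub_mul, div_mul_cancel₀ _ hπ.ne'] at h1
      rw [hφ]; linarith
  have hθφ : θ = φ + n * Real.pi := by rw [hφ]; ring
  have hcos : Real.cos θ = (-1 : ℝ)^n * Real.cos φ := by
    rw [hθφ, Real.cos_add_int_mul_pi]
  have hφne : Real.cos φ ≠ 0 := by
    intro h0; apply h; rw [hcos, h0, mul_zero]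
  have hlt2 : φ < Real.pi / 2 := by
    rcases lt_or_eq_of_le (abs_le.mp hφabs).2 with h2 | h2
    · exact h2
    · exact absurd (h2 ▸ Real.cos_pi_div_two) hφne
  have hlt1 : -(Real.pi / 2) < φ := by
    rcases lt_or_eq_of_le (abs_le.mp hφabs).1 with h2 | h2
    · exact h2
    · exfalso; apply hφne; rw [← h2, Real.cos_neg, Real.cos_pi_div_two]
  have hcospos : 0 < Real.cos φ := Real.cos_pos_of_mem_Ioo ⟨hlt1, hlt2⟩
  have htan : Real.tan θ = Real.tan φ := by rw [hθφ, Real.tan_add_int_mul_pi]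
  refine ⟨n, ?_, ?_⟩
  · rw [htan, Real.arctan_tan hlt1 hlt2, hφ]; ring
  · rcases Int.even_or_odd n with he | ho
    · rw [hcos, he.neg_one_zpow, one_mul, Real.sign_of_pos hcospos]
    · rw [hcos, ho.neg_one_zpow, neg_one_mul,
        Real.sign_of_neg (neg_neg_iff_pos.mpr hcospos)]

theorem stmt_16 (u β ℓ : ℝ) (hu0 : 0 < u) (hu1 : u < 1) (hβ : 0 < β) (hℓ : 0 ≤ ℓ)
    (hD : (2 - u^4) * Real.cos (β / u) + u^4 * (1 - 2*u^4) * Real.cosh (β * u) ≠ 0) :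
    (((u^4 - 2) * Real.cos (β / u) + u^4 * (2*u^4 - 1) * Real.cosh (β * u)
        = u^4 * (Real.cosh (β * u) - Real.cos (β / u))
            * Real.cos (2 * β * ℓ * Real.sqrt (u^(-2:ℤ) - u^2))) ∧
      (2 * Real.sqrt (1 - u^4) * (u^6 * Real.sinh (β * u) - Real.sin (β / u))
        = -(u^4 * (Real.cosh (β * u) - Real.cos (β / u)))
            * Real.sin (2 * β * ℓ * Real.sqrt (u^(-2:ℤ) - u^2)))) ↔
    (g u β = 0 ∧
      ∃ n : ℤ, 2 * β * ℓ * Real.sqrt (u^(-2:ℤ) - u^2)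
          = Real.arctan ((2 * Real.sqrt (1 - u^4) * (u^6 * Real.sinh (β * u) - Real.sin (β / u)))
              / ((2 - u^4) * Real.cos (β / u) + u^4 * (1 - 2*u^4) * Real.cosh (β * u)))
            + Real.pi * n ∧
        (-1 : ℝ)^n = Real.sign ((u^4 - 2) * Real.cos (β / u)
            + u^4 * (2*u^4 - 1) * Real.cosh (β * u))) := by
  set c := Real.cos (β / u) with hc_def
  set s := Real.sin (β / u) with hs_def
  set C := Real.cosh (β * u) with hC_def
  set Sh := Real.sinh (β * u) with hSh_def
  set q := Real.sqrt (1 - u^4) with hq_def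
  set θ := 2 * β * ℓ * Real.sqrt (u^(-2:ℤ) - u^2) with hθ_def
  set A1 := (u^4 - 2) * c + u^4 * (2*u^4 - 1) * C with hA1_def
  set A2 := 2 * q * (u^6 * Sh - s) with hA2_def
  set B := u^4 * (C - c) with hB_def
  set D := (2 - u^4) * c + u^4 * (1 - 2*u^4) * C with hDdef
  have hu4 : u^4 < 1 := pow_lt_one₀ hu0.le hu1 (by norm_num)
  have hq2 : q^2 = 1 - u^4 := Real.sq_sqrt (by linarith)
  have hp : s^2 + c^2 = 1 := Real.sin_sq_add_cos_sq _
  have hch : C^2 - Sh^2 = 1 := Real.cosh_sq_sub_sinh_sq _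
  have hkey : A1^2 + A2^2 - B^2 = 4*(1-u^4) * (u^4*(1-u^4)*C*c - 2*u^6*Sh*s + 1 - u^12) :=
    key_alg u c s C Sh q hq2 hp hch
  have hgval : g u β = u^4*(1-u^4)*C*c - 2*u^6*Sh*s + 1 - u^12 := by rw [g]
  have hBpos : 0 < B := by
    have h1 : 1 < C := Real.one_lt_cosh.mpr (by positivity)
    have h2 : c ≤ 1 := Real.cos_le_one _
    have h3 : 0 < u^4 := by positivity
    rw [hB_def]; nlinarith
  have hDA : D = -A1 := by rw [hDdef, hA1_def]; ring
  have hA1ne : A1 ≠ 0 := by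
    intro h0; apply hD; rw [hDA, h0, neg_zero]
  have hsignA : Real.sign A1 * |A1| = A1 := by
    rcases hA1ne.lt_or_gt with hlt | hlt
    · rw [Real.sign_of_neg hlt, abs_of_neg hlt]; ring
    · rw [Real.sign_of_pos hlt, abs_of_pos hlt, one_mul]
  clear_value c s C Sh q θ A1 A2 B D
  constructor
  · rintro ⟨h1, h2⟩
    have hcosθ : Real.cos θ = A1 / B := by
      rw [eq_div_iff hBpos.ne', h1]; ring
    have hsinθ : Real.sin θ = -A2 / B := by
      rw [eq_div_iff hBpos.ne', h2]; ring
    have h0 : A1^2 + A2^2 - B^2 = 0 := by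
      rw [h1, h2]; linear_combination B^2 * Real.sin_sq_add_cos_sq θ
    have hg : g u β = 0 := by
      have h4 : 4*(1-u^4) * (g u β) = 0 := by rw [hgval, ← hkey, h0]
      have h5 : (0:ℝ) < 4*(1-u^4) := by nlinarith
      exact (mul_eq_zero.mp h4).resolve_left h5.ne'
    refine ⟨hg, ?_⟩
    have hcosne : Real.cos θ ≠ 0 := by
      rw [hcosθ]; exact div_ne_zero hA1ne hBpos.ne'
    obtain ⟨n, hn1, hn2⟩ := rep_exists θ hcosne
    have htan : Real.tan θ = A2 / D := by
      rw [Real.tan_eq_sin_div_cos, hsinθ, hcosθ, hDA]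
      rw [div_div_div_cancel_right₀, neg_div, div_neg]
      exact hBpos.ne'
    have hsign : Real.sign (Real.cos θ) = Real.sign A1 := by
      rcases hA1ne.lt_or_gt with hlt | hlt
      · rw [Real.sign_of_neg hlt, Real.sign_of_neg]
        rw [hcosθ]; exact div_neg_of_neg_of_pos hlt hBpos
      · rw [Real.sign_of_pos hlt, Real.sign_of_pos]
        rw [hcosθ]; exact div_pos hlt hBpos
    rw [htan] at hn1
    rw [hsign] at hn2
    exact ⟨n, hn1, hn2⟩
  · rintro ⟨hg, n, hn1, hn2⟩
    set t : ℝ := A2 / D with ht_def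
    have hsum : A1^2 + A2^2 = B^2 := by
      have h0 : A1^2 + A2^2 - B^2 = 0 := by rw [hkey, ← hgval, hg]; ring
      linarith
    have hA1abs : (0:ℝ) < |A1| := abs_pos.mpr hA1ne
    have hroot : Real.sqrt (1 + t^2) = B / |A1| := by
      have he : 1 + t^2 = (B / |A1|)^2 := by
        rw [ht_def, hDA, div_pow, div_pow, sq_abs, neg_sq, ← hsum, add_div,
          div_self (pow_ne_zero 2 hA1ne)]
      rw [he, Real.sqrt_sq (div_nonneg hBpos.le (abs_nonneg _))]
    have htD : t = -(A2 / A1) := by rw [ht_def, hDA, div_neg]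
    have hcosθ : Real.cos θ = A1 / B := by
      rw [hn1, mul_comm Real.pi (n:ℝ), Real.cos_add_int_mul_pi, hn2, Real.cos_arctan, hroot]
      rw [one_div_div, mul_div_assoc', hsignA]
    have hsinθ : Real.sin θ = -A2 / B := by
      rw [hn1, mul_comm Real.pi (n:ℝ), Real.sin_add_int_mul_pi, hn2, Real.sin_arctan, hroot,
        htD]
      rw [div_div_eq_mul_div]
      have key2 : Real.sign A1 * (-(A2 / A1) * |A1|) = -A2 := by
        calc Real.sign A1 * (-(A2 / A1) * |A1|)
            = -(A2 / A1 * (Real.sign A1 * |A1|)) := by ring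
          _ = -(A2 / A1 * A1) := by rw [hsignA]
          _ = -A2 := by rw [div_mul_cancel₀ _ hA1ne]
      rw [← mul_div_assoc, key2]
    constructor
    · rw [hcosθ, mul_div_cancel₀ _ hBpos.ne']
    · rw [hsinθ]
      field_simp
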